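/- The adjusted moments μ̃_k = ∫₀^∞ (x-α)^k · x^α e^{-x}/(x-α)² dx of the Type III X₁-Laguerre weight (with -1 < α < 0) satisfy the recursion μ̃_{k+2} = k·μ̃_{k+1} - α(1-k)·μ̃_k for all k ∈ ℕ₀. -/

import Mathlib

open MeasureTheory Real Set Filter

/-- Integrability of `(x-α)^n * x^β * e^{-x}` on `(0,∞)` for natural `n`, `β > -1`, `α < 0`. -/
lemma typeIII_aux_int_pow (α : ℝ) (h2 : α < 0) :
    ∀ (n : ℕ) (β : ℝ), -1 < β →
      IntegrableOn (fun x : ℝ => (x - α) ^ n * (x ^ β * Real.exp (-x))) (Set.Ioi 0) := by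
  intro n
  induction n with
  | zero =>
    intro β hβ
    have h : IntegrableOn (fun x : ℝ => Real.exp (-x) * x ^ (β + 1 - 1)) (Set.Ioi 0) :=
      Real.GammaIntegral_convergent (s := β + 1) (by linarith)
    refine IntegrableOn.congr_fun h ?_ measurableSet_Ioi
    intro x hx
    simp only [add_sub_cancel_right]
    ring
  | succ n ih =>
    intro β hβ
    have hInt : IntegrableOn
        (fun x : ℝ => (x - α) ^ n * (x ^ (β+1) * Real.exp (-x)) +
          (-α) * ((x - α) ^ n * (x ^ β * Real.exp (-x)))) (Set.Ioi 0) :=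
      ((ih (β + 1) (by linarith)).add ((ih β hβ).const_mul (-α)))
    refine IntegrableOn.congr_fun hInt ?_ measurableSet_Ioi
    intro x hx
    simp only
    have hx0 : (x : ℝ) ≠ 0 := ne_of_gt hx
    have : x ^ (β + 1) = x ^ β * x := Real.rpow_add_one hx0 β
    rw [this]
    ring

/-- Integrability of `(x-α)^j * x^α * e^{-x}` on `(0,∞)` for integer `j ≥ -2`. -/
lemma typeIII_aux_int (α : ℝ) (h1 : -1 < α) (h2 : α < 0) (j : ℤ) (hj : -2 ≤ j) :
    IntegrableOn (fun x : ℝ => (x - α) ^ j * (x ^ α * Real.exp (-x))) (Set.Ioi 0) := by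
  rcases le_or_gt 0 j with hj0 | hj0
  · lift j to ℕ using hj0 with n
    have h := typeIII_aux_int_pow α h2 n α h1
    refine IntegrableOn.congr_fun h ?_ measurableSet_Ioi
    intro x hx
    simp only [zpow_natCast]
  · -- j < 0, dominate by constant times `x ^ α * e^{-x}`
    obtain ⟨n, rfl⟩ := Int.exists_eq_neg_ofNat hj0.le
    have hα : (0 : ℝ) < -α := by linarith
    have hGamma := Real.GammaIntegral_convergent (s := α + 1) (by linarith)
    have hGamma' : IntegrableOn
        (fun x : ℝ => ((-α) ^ n)⁻¹ * (Real.exp (-x) * x ^ (α + 1 - 1))) (Set.Ioi 0) :=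
      hGamma.const_mul _
    refine Integrable.mono' hGamma' ?_ ?_
    · -- measurability
      apply (ContinuousOn.aestronglyMeasurable ?_ measurableSet_Ioi)
      intro x hx
      have hxα : x - α ≠ 0 := by
        have : (0:ℝ) < x := hx
        intro h; nlinarith [sub_eq_zero.mp h]
      have c1 : ContinuousAt (fun x : ℝ => (x - α) ^ (-(n:ℤ))) x :=
        (continuousAt_id.sub continuousAt_const).zpow₀ _ (Or.inl hxα)
      have c2 : ContinuousAt (fun x : ℝ => x ^ α) x :=
        Real.continuousAt_rpow_const x α (Or.inl (ne_of_gt hx))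
      exact (c1.mul (c2.mul ((Real.continuous_exp.comp continuous_neg).continuousAt))).continuousWithinAt
    · filter_upwards [ae_restrict_mem measurableSet_Ioi] with x hx
      have hx0 : (0:ℝ) < x := hx
      have hxα : (0:ℝ) < x - α := by linarith
      have hrpow : (0:ℝ) ≤ x ^ α := Real.rpow_nonneg hx0.le α
      have hbound : (x - α) ^ (-(n:ℤ)) ≤ ((-α) ^ n)⁻¹ := by
        rw [zpow_neg, zpow_natCast]
        apply inv_anti₀ (pow_pos hα n)
        exact pow_le_pow_left₀ hα.le (by linarith) n
      have hz : (0:ℝ) < (x - α) ^ (-(n:ℤ)) := zpow_pos hxα _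
      rw [Real.norm_eq_abs, abs_of_nonneg (by positivity)]
      have : x ^ (α + 1 - 1) = x ^ α := by norm_num
      rw [this]
      calc (x - α) ^ (-(n:ℤ)) * (x ^ α * Real.exp (-x))
          ≤ ((-α) ^ n)⁻¹ * (x ^ α * Real.exp (-x)) := by
            apply mul_le_mul_of_nonneg_right hbound (by positivity)
        _ = ((-α) ^ n)⁻¹ * (Real.exp (-x) * x ^ α) := by ring

/-- The adjusted moments of the Type III `X₁`-Laguerre weight (`-1 < α < 0`) satisfy
`μ̃_{k+2} = k μ̃_{k+1} - α(1-k) μ̃_k`. -/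
theorem typeIII_moment_recursion (α : ℝ) (h1 : -1 < α) (h2 : α < 0) (μ : ℕ → ℝ)
    (hμ : ∀ k : ℕ, μ k = ∫ x in Set.Ioi (0 : ℝ),
      (x - α) ^ k * (x ^ α * Real.exp (-x) / (x - α) ^ 2)) :
    ∀ k : ℕ, μ (k + 2) = (k : ℝ) * μ (k + 1) - α * (1 - (k : ℝ)) * μ k := by
  intro k
  set G : ℤ → ℝ := fun j => ∫ x in Set.Ioi (0:ℝ), (x - α) ^ j * (x ^ α * Real.exp (-x)) with hG
  have hμG : ∀ m : ℕ, μ m = G ((m : ℤ) - 2) := by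
    intro m
    rw [hμ m, hG]
    apply setIntegral_congr_fun measurableSet_Ioi
    intro x hx
    have hx0 : (0:ℝ) < x := hx
    have hxα : (0:ℝ) < x - α := by linarith
    have hne : (x - α) ≠ 0 := ne_of_gt hxα
    simp only
    rw [zpow_sub₀ hne, zpow_natCast, zpow_two]
    field_simp
  -- FTC on `F x = (x-α)^(k-1) * x^(α+1) * e^{-x}`
  set F : ℝ → ℝ := fun x => (x - α) ^ ((k:ℤ) - 1) * (x ^ (α + 1) * Real.exp (-x)) with hF
  set F' : ℝ → ℝ := fun x =>
    (k : ℝ) * ((x - α) ^ ((k:ℤ) - 1) * (x ^ α * Real.exp (-x)))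
      + (α * ((k : ℝ) - 1)) * ((x - α) ^ ((k:ℤ) - 2) * (x ^ α * Real.exp (-x)))
      - (x - α) ^ (k:ℤ) * (x ^ α * Real.exp (-x)) with hF'
  have i1 := typeIII_aux_int α h1 h2 ((k:ℤ) - 1) (by omega)
  have i2 := typeIII_aux_int α h1 h2 ((k:ℤ) - 2) (by omega)
  have i3 := typeIII_aux_int α h1 h2 (k:ℤ) (by omega)
  have hcont : ContinuousWithinAt F (Set.Ici 0) 0 := by
    have hne : (0:ℝ) - α ≠ 0 := by
      intro h; rw [sub_eq_zero] at h; linarith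
    have c1 : ContinuousAt (fun x : ℝ => (x - α) ^ ((k:ℤ) - 1)) 0 :=
      (continuousAt_id.sub continuousAt_const).zpow₀ _ (Or.inl hne)
    have c2 : ContinuousAt (fun x : ℝ => x ^ (α + 1)) 0 :=
      Real.continuousAt_rpow_const 0 (α + 1) (Or.inr (by linarith))
    exact (c1.mul (c2.mul ((Real.continuous_exp.comp continuous_neg).continuousAt))).continuousWithinAt
  have hderiv : ∀ x ∈ Set.Ioi (0:ℝ), HasDerivAt F (F' x) x := by
    intro x hx
    have hx0 : (0:ℝ) < x := hx
    have hxα : (0:ℝ) < x - α := by linarith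
    have hne : x - α ≠ 0 := ne_of_gt hxα
    have d1 : HasDerivAt (fun x : ℝ => (x - α) ^ ((k:ℤ) - 1))
        ((((k:ℤ) - 1 : ℤ) : ℝ) * (x - α) ^ ((k:ℤ) - 2)) x := by
      have h := hasDerivAt_zpow ((k:ℤ) - 1) (x - α) (Or.inl hne)
      have hid : HasDerivAt (fun x : ℝ => x - α) 1 x := (hasDerivAt_id x).sub_const α
      have := HasDerivAt.comp x h hid
      simpa [Function.comp_def, show (k:ℤ) - 1 - 1 = (k:ℤ) - 2 by ring] using this
    have d2 : HasDerivAt (fun x : ℝ => x ^ (α + 1)) ((α + 1) * x ^ α) x := by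
      have h := Real.hasDerivAt_rpow_const (x := x) (p := α + 1) (Or.inl hx0.ne')
      simpa [add_sub_cancel_right] using h
    have d3 : HasDerivAt (fun x : ℝ => Real.exp (-x)) (-Real.exp (-x)) x := by
      have := (Real.hasDerivAt_exp (-x)).comp x ((hasDerivAt_id x).neg)
      simpa [Function.comp_def] using this
    have dF := d1.mul (d2.mul d3)
    refine dF.congr_deriv ?_
    have A1 : x ^ (α + 1) = x ^ α * x := Real.rpow_add_one hx0.ne' α
    have A2 : (x - α) ^ ((k:ℤ) - 1) = (x - α) ^ ((k:ℤ) - 2) * (x - α) := by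
      rw [show (k:ℤ) - 1 = ((k:ℤ) - 2) + 1 by ring, zpow_add_one₀ hne]
    have A3 : (x - α) ^ (k:ℤ) = (x - α) ^ ((k:ℤ) - 2) * ((x - α) * (x - α)) := by
      rw [show (k:ℤ) = ((k:ℤ) - 2) + 1 + 1 by ring, zpow_add_one₀ hne, zpow_add_one₀ hne]
      ring
    rw [hF']
    simp only [Pi.mul_apply]
    rw [A1, A2, A3]
    push_cast
    ring
  have hint : IntegrableOn F' (Set.Ioi 0) :=
    ((i1.const_mul _).add (i2.const_mul _)).sub i3
  have htend : Filter.Tendsto F Filter.atTop (nhds 0) := by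
    have h0 := tendsto_pow_mul_exp_neg_atTop_nhds_zero (k + 1)
    have hbound : Filter.Tendsto
        (fun x : ℝ => Real.exp 1 * ((x + 1) ^ (k + 1) * Real.exp (-(x + 1))))
        Filter.atTop (nhds 0) := by
      have := (h0.comp (tendsto_atTop_add_const_right Filter.atTop 1 tendsto_id)).const_mul
        (Real.exp 1)
      simpa [Function.comp] using this
    apply squeeze_zero' ?_ ?_ hbound
    · filter_upwards [Filter.eventually_ge_atTop (1:ℝ)] with x hx
      have hx0 : (0:ℝ) < x := by linarith
      have hxα : (0:ℝ) < x - α := by linarith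
      positivity
    · filter_upwards [Filter.eventually_ge_atTop (1:ℝ)] with x hx
      have hx0 : (0:ℝ) < x := by linarith
      have hxα : (1:ℝ) ≤ x - α := by linarith
      have hxα0 : (0:ℝ) < x - α := by linarith
      have b1 : (x - α) ^ ((k:ℤ) - 1) ≤ (x - α) ^ (k:ℤ) :=
        zpow_le_zpow_right₀ hxα (by omega)
      have b2 : (x - α) ^ (k:ℤ) ≤ (x + 1) ^ k := by
        rw [zpow_natCast]
        exact pow_le_pow_left₀ hxα0.le (by linarith) k
      have b3 : x ^ (α + 1) ≤ x + 1 := by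
        calc x ^ (α + 1) ≤ x ^ (1:ℝ) :=
              Real.rpow_le_rpow_of_exponent_le hx (by linarith)
          _ = x := Real.rpow_one x
          _ ≤ x + 1 := by linarith
      have hexp : Real.exp 1 * Real.exp (-(x + 1)) = Real.exp (-x) := by
        rw [← Real.exp_add]; norm_num
      have hb1 : (0:ℝ) ≤ x ^ (α + 1) * Real.exp (-x) := by positivity
      have key : F x ≤ (x + 1) ^ k * ((x + 1) * Real.exp (-x)) := by
        rw [hF]
        simp only
        calc (x - α) ^ ((k:ℤ) - 1) * (x ^ (α + 1) * Real.exp (-x))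
            ≤ (x + 1) ^ k * (x ^ (α + 1) * Real.exp (-x)) := by
              apply mul_le_mul_of_nonneg_right (le_trans b1 b2) hb1
          _ ≤ (x + 1) ^ k * ((x + 1) * Real.exp (-x)) := by
              apply mul_le_mul_of_nonneg_left
                (mul_le_mul_of_nonneg_right b3 (Real.exp_nonneg _)) (by positivity)
      calc F x ≤ (x + 1) ^ k * ((x + 1) * Real.exp (-x)) := key
        _ = Real.exp 1 * ((x + 1) ^ (k + 1) * Real.exp (-(x + 1))) := by
            rw [← hexp]; ring
  have hFTC := MeasureTheory.integral_Ioi_of_hasDerivAt_of_tendsto hcont hderiv hint htend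
  have hF0 : F 0 = 0 := by
    rw [hF]
    simp only
    rw [Real.zero_rpow (by intro h; linarith : α + 1 ≠ 0)]
    ring
  rw [hF0, sub_zero] at hFTC
  have hsplit : (∫ x in Set.Ioi (0:ℝ), F' x)
      = (k:ℝ) * G ((k:ℤ) - 1) + (α * ((k:ℝ) - 1)) * G ((k:ℤ) - 2) - G (k:ℤ) := by
    have hadd : Integrable (fun x : ℝ =>
        (k:ℝ) * ((x - α) ^ ((k:ℤ) - 1) * (x ^ α * Real.exp (-x)))
          + (α * ((k:ℝ) - 1)) * ((x - α) ^ ((k:ℤ) - 2) * (x ^ α * Real.exp (-x))))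
        (volume.restrict (Set.Ioi 0)) := (i1.const_mul _).add (i2.const_mul _)
    have hc1 : Integrable (fun x : ℝ =>
        (k:ℝ) * ((x - α) ^ ((k:ℤ) - 1) * (x ^ α * Real.exp (-x))))
        (volume.restrict (Set.Ioi 0)) := i1.const_mul _
    have hc2 : Integrable (fun x : ℝ =>
        (α * ((k:ℝ) - 1)) * ((x - α) ^ ((k:ℤ) - 2) * (x ^ α * Real.exp (-x))))
        (volume.restrict (Set.Ioi 0)) := i2.const_mul _
    simp only [hF']
    rw [MeasureTheory.integral_sub hadd i3, MeasureTheory.integral_add hc1 hc2,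
      MeasureTheory.integral_const_mul, MeasureTheory.integral_const_mul]
  have hEq : G (k:ℤ) = (k:ℝ) * G ((k:ℤ) - 1) + (α * ((k:ℝ) - 1)) * G ((k:ℤ) - 2) := by
    rw [hFTC] at hsplit
    linarith
  rw [hμG (k + 2), hμG (k + 1), hμG k]
  rw [show ((k + 2 : ℕ) : ℤ) - 2 = (k:ℤ) by push_cast; ring,
    show ((k + 1 : ℕ) : ℤ) - 2 = (k:ℤ) - 1 by push_cast; ring]
  linear_combination hEq
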